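/- (Cleaning Lemma) With the notation of the logical-operator counting proposition: if Σ^⊥ ∩ V_M = Σ ∩ V_M (i.e., ℓ_M = 0, the region M is correctable), then ℓ_{M^c} = 2k; in particular every class in Σ^⊥/Σ has a representative supported on M^c. -/

import Mathlib

open Matrix

/-- The subspace of vectors of `F₂^{2n}` supported on the set `M` of qubits. -/
noncomputable def coordSubspace {n : ℕ} (M : Finset (Fin n)) :
    Submodule (ZMod 2) (Fin n ⊕ Fin n → ZMod 2) :=
  ⨅ i ∈ Mᶜ, (LinearMap.ker (LinearMap.proj (R := ZMod 2) (φ := fun _ : Fin n ⊕ Fin n => ZMod 2) (Sum.inl i)) ⊓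
    LinearMap.ker (LinearMap.proj (R := ZMod 2) (φ := fun _ : Fin n ⊕ Fin n => ZMod 2) (Sum.inr i)))

/-- The standard symplectic form on `F₂^{2n}` (over `F₂`, `−1 = 1`). -/
noncomputable def stdSymplecticForm (n : ℕ) :
    LinearMap.BilinForm (ZMod 2) (Fin n ⊕ Fin n → ZMod 2) :=
  Matrix.toLinearMap₂' (ZMod 2) (Matrix.fromBlocks 0 1 1 0)

lemma stdForm_apply {n : ℕ} (u v : Fin n ⊕ Fin n → ZMod 2) :
    stdSymplecticForm n u v =
      (∑ i, u (Sum.inl i) * v (Sum.inr i)) + ∑ i, u (Sum.inr i) * v (Sum.inl i) := by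
  rw [stdSymplecticForm, Matrix.toLinearMap₂'_apply]
  rw [Fintype.sum_sum_type]
  simp only [Fintype.sum_sum_type, Matrix.fromBlocks_apply₁₁, Matrix.fromBlocks_apply₁₂,
    Matrix.fromBlocks_apply₂₁, Matrix.fromBlocks_apply₂₂, Matrix.zero_apply, Matrix.one_apply,
    smul_eq_mul, mul_zero, Finset.sum_const_zero, zero_add, add_zero, mul_ite, mul_one,
    Finset.sum_ite_eq, Finset.mem_univ, if_true]

lemma mem_coordSubspace {n : ℕ} {M : Finset (Fin n)} {v : Fin n ⊕ Fin n → ZMod 2} :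
    v ∈ coordSubspace M ↔ ∀ i ∉ M, v (Sum.inl i) = 0 ∧ v (Sum.inr i) = 0 := by
  simp [coordSubspace, Submodule.mem_iInf, Submodule.mem_inf, LinearMap.mem_ker,
    Finset.mem_compl]

lemma stdForm_comm {n : ℕ} (u v : Fin n ⊕ Fin n → ZMod 2) :
    stdSymplecticForm n u v = stdSymplecticForm n v u := by
  rw [stdForm_apply, stdForm_apply, add_comm]
  congr 1 <;> exact Finset.sum_congr rfl fun i _ => mul_comm _ _

lemma stdForm_isRefl {n : ℕ} : (stdSymplecticForm n).IsRefl := by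
  intro u v h; rwa [stdForm_comm]

lemma stdForm_single_inl {n : ℕ} (i : Fin n) (v : Fin n ⊕ Fin n → ZMod 2) :
    stdSymplecticForm n (Pi.single (Sum.inl i) 1) v = v (Sum.inr i) := by
  rw [stdForm_apply]
  simp [Pi.single_apply]

lemma stdForm_single_inr {n : ℕ} (i : Fin n) (v : Fin n ⊕ Fin n → ZMod 2) :
    stdSymplecticForm n (Pi.single (Sum.inr i) 1) v = v (Sum.inl i) := by
  rw [stdForm_apply]
  simp [Pi.single_apply]

lemma stdForm_nondeg {n : ℕ} : (stdSymplecticForm n).Nondegenerate := by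
  refine (LinearMap.IsRefl.nondegenerate_iff_separatingLeft stdForm_isRefl).mpr ?_
  intro u hu
  funext x
  cases x with
  | inl i => have := hu (Pi.single (Sum.inr i) 1)
             rw [stdForm_comm, stdForm_single_inr] at this; exact this
  | inr i => have := hu (Pi.single (Sum.inl i) 1)
             rw [stdForm_comm, stdForm_single_inl] at this; exact this

lemma single_mem_coordSubspace {n : ℕ} {M : Finset (Fin n)} {i : Fin n} (hi : i ∈ M)
    (x : Fin n ⊕ Fin n) (hx : x = Sum.inl i ∨ x = Sum.inr i) :
    Pi.single (M := fun _ : Fin n ⊕ Fin n => ZMod 2) x 1 ∈ coordSubspace M := by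
  rw [mem_coordSubspace]
  intro j hj
  constructor <;> rw [Pi.single_apply, if_neg] <;> rcases hx with rfl | rfl <;>
    simp_all <;> rintro rfl <;> exact hj hi

lemma orthogonal_coordSubspace {n : ℕ} (M : Finset (Fin n)) :
    (stdSymplecticForm n).orthogonal (coordSubspace M) = coordSubspace Mᶜ := by
  ext v
  rw [LinearMap.BilinForm.mem_orthogonal_iff, mem_coordSubspace]
  constructor
  · intro h i hi
    rw [Finset.mem_compl, not_not] at hi
    constructor
    · have := h _ (single_mem_coordSubspace hi (Sum.inr i) (Or.inr rfl))
      rwa [stdForm_single_inr] at this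
    · have := h _ (single_mem_coordSubspace hi (Sum.inl i) (Or.inl rfl))
      rwa [stdForm_single_inl] at this
  · intro h u hu
    rw [stdForm_apply]
    rw [mem_coordSubspace] at hu
    have z : ∀ i : Fin n, u (Sum.inl i) * v (Sum.inr i) = 0 ∧
        u (Sum.inr i) * v (Sum.inl i) = 0 := by
      intro i
      by_cases hi : i ∈ M
      · have := h i (by simpa using hi)
        rw [this.1, this.2]; simp
      · have := hu i hi
        rw [this.1, this.2]; simp
    rw [Finset.sum_congr rfl fun i _ => (z i).1, Finset.sum_congr rfl fun i _ => (z i).2]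
    simp

lemma coordSubspace_inf_compl {n : ℕ} (M : Finset (Fin n)) :
    coordSubspace M ⊓ coordSubspace Mᶜ = ⊥ := by
  rw [eq_bot_iff]
  rintro v ⟨h1, h2⟩
  replace h1 := mem_coordSubspace.mp h1
  replace h2 := mem_coordSubspace.mp h2
  simp only [Submodule.mem_bot]
  funext x
  cases x with
  | inl i =>
    by_cases hi : i ∈ M
    · exact (h2 i (by simpa using hi)).1
    · exact (h1 i hi).1
  | inr i =>
    by_cases hi : i ∈ M
    · exact (h2 i (by simpa using hi)).2
    · exact (h1 i hi).2

lemma coordSubspace_sup_compl {n : ℕ} (M : Finset (Fin n)) :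
    coordSubspace M ⊔ coordSubspace Mᶜ = ⊤ := by
  rw [eq_top_iff]
  intro v _
  rw [Submodule.mem_sup]
  refine ⟨fun x => if Sum.elim id id x ∈ M then v x else 0, ?_,
    fun x => if Sum.elim id id x ∈ M then 0 else v x, ?_, ?_⟩
  · rw [mem_coordSubspace]; intro i hi; simp [hi]
  · rw [mem_coordSubspace]; intro i hi
    rw [Finset.mem_compl, not_not] at hi; simp [hi]
  · funext x; by_cases hx : Sum.elim id id x ∈ M <;> simp [hx]

/-- `ℓ_M` : the dimension of `(Σ^⊥ ∩ V_M)/(Σ ∩ V_M)`. -/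
noncomputable def numLogical {n : ℕ} (Sig : Submodule (ZMod 2) (Fin n ⊕ Fin n → ZMod 2))
    (M : Finset (Fin n)) : ℕ :=
  Module.finrank (ZMod 2)
    (↥((stdSymplecticForm n).orthogonal Sig ⊓ coordSubspace M) ⧸
      Submodule.comap ((stdSymplecticForm n).orthogonal Sig ⊓ coordSubspace M).subtype
        (Sig ⊓ coordSubspace M))

lemma orthogonal_sup {n : ℕ} (W₁ W₂ : Submodule (ZMod 2) (Fin n ⊕ Fin n → ZMod 2)) :
    (stdSymplecticForm n).orthogonal (W₁ ⊔ W₂) =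
      (stdSymplecticForm n).orthogonal W₁ ⊓ (stdSymplecticForm n).orthogonal W₂ := by
  apply le_antisymm
  · exact le_inf (LinearMap.BilinForm.orthogonal_le le_sup_left)
      (LinearMap.BilinForm.orthogonal_le le_sup_right)
  · rintro x ⟨h1, h2⟩
    rw [LinearMap.BilinForm.mem_orthogonal_iff]
    intro y hy
    rw [Submodule.mem_sup] at hy
    obtain ⟨a, ha, b, hb, rfl⟩ := hy
    have := h1 a ha
    have := h2 b hb
    rw [map_add, LinearMap.add_apply]
    simp_all

set_option maxHeartbeats 1000000 in
set_option synthInstance.maxHeartbeats 400000 in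
/-- Cleaning lemma: if the region `M` is correctable (`Σ^⊥ ∩ V_M = Σ ∩ V_M`),
then `ℓ_{M^c} = 2k`, and every class of logical operators in `Σ^⊥/Σ` has a
representative supported on `M^c`. -/
theorem cleaning_lemma {n : ℕ}
    (Sig : Submodule (ZMod 2) (Fin n ⊕ Fin n → ZMod 2))
    (hiso : ∀ x ∈ Sig, ∀ y ∈ Sig, stdSymplecticForm n x y = 0)
    (M : Finset (Fin n))
    (hcorr : (stdSymplecticForm n).orthogonal Sig ⊓ coordSubspace M =
      Sig ⊓ coordSubspace M) :
    numLogical Sig Mᶜ = 2 * (n - Module.finrank (ZMod 2) Sig) ∧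
    ∀ v ∈ (stdSymplecticForm n).orthogonal Sig,
      ∃ w ∈ (stdSymplecticForm n).orthogonal Sig ⊓ coordSubspace Mᶜ, v - w ∈ Sig := by
  classical
  set B := stdSymplecticForm n with hB
  set Sp := B.orthogonal Sig with hSp
  have hle : Sig ≤ Sp := by
    intro x hx
    rw [hSp, LinearMap.BilinForm.mem_orthogonal_iff]
    intro y hy
    exact hiso y hy x hx
  set N := Module.finrank (ZMod 2) (Fin n ⊕ Fin n → ZMod 2) with hNdef
  have hN : N = n + n := by
    rw [hNdef, Module.finrank_fintype_fun_eq_card, Fintype.card_sum, Fintype.card_fin]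
  have hor : ∀ W : Submodule (ZMod 2) (Fin n ⊕ Fin n → ZMod 2),
      Module.finrank (ZMod 2) (B.orthogonal W) + Module.finrank (ZMod 2) W = N := by
    intro W
    rw [LinearMap.BilinForm.finrank_orthogonal stdForm_nondeg,
      Nat.sub_add_cancel (Submodule.finrank_le W)]
  set VM := coordSubspace M with hVM
  set VMc := coordSubspace Mᶜ with hVMc
  set d := Module.finrank (ZMod 2) Sig with hd
  set a := Module.finrank (ZMod 2) ↥(Sp ⊓ VM) with ha
  set b := Module.finrank (ZMod 2) ↥(Sig ⊓ VMc) with hb2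
  set c := Module.finrank (ZMod 2) ↥(Sp ⊓ VMc) with hc
  set m := Module.finrank (ZMod 2) VM with hm
  set m' := Module.finrank (ZMod 2) VMc with hm'
  -- m + m' = N
  have e1 : m + m' = N := by
    have := Submodule.finrank_sup_add_finrank_inf_eq VM VMc
    rw [hVM, hVMc, coordSubspace_sup_compl, coordSubspace_inf_compl, finrank_top,
      finrank_bot, add_zero] at this
    exact this.symm
  -- c + finrank (Sig ⊔ VM) = N
  have e2 : c + Module.finrank (ZMod 2) ↥(Sig ⊔ VM) = N := by
    have h := hor (Sig ⊔ VM)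
    rwa [orthogonal_sup, ← hSp, hVM, orthogonal_coordSubspace, ← hVMc, ← hc] at h
  have e3 : Module.finrank (ZMod 2) ↥(Sig ⊔ VM) + a = d + m := by
    have h := Submodule.finrank_sup_add_finrank_inf_eq Sig VM
    rw [← hcorr] at h
    exact h
  have e4 : a + Module.finrank (ZMod 2) ↥(Sig ⊔ VMc) = N := by
    have h := hor (Sig ⊔ VMc)
    rwa [orthogonal_sup, ← hSp, hVMc, orthogonal_coordSubspace, compl_compl, ← hVM, ← ha] at h
  have e5 : Module.finrank (ZMod 2) ↥(Sig ⊔ VMc) + b = d + m' :=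
    Submodule.finrank_sup_add_finrank_inf_eq Sig VMc
  have e6 : Module.finrank (ZMod 2) Sp + d = N := hor Sig
  have e7 : d ≤ Module.finrank (ZMod 2) Sp := Submodule.finrank_mono hle
  -- quotient rank
  have hss : Sig ⊓ VMc ≤ Sp ⊓ VMc := inf_le_inf_right _ hle
  have hq : numLogical Sig Mᶜ + b = c := by
    have hcomap : Module.finrank (ZMod 2)
        ↥(Submodule.comap (Sp ⊓ VMc).subtype (Sig ⊓ VMc)) = b :=
      LinearEquiv.finrank_eq (Submodule.comapSubtypeEquivOfLe hss)
    have h := Submodule.finrank_quotient_add_finrank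
      (Submodule.comap (Sp ⊓ VMc).subtype (Sig ⊓ VMc))
    rw [hcomap] at h
    exact h
  constructor
  · omega
  · -- cleaning
    intro v hv
    have hWle : Sig ⊔ (Sp ⊓ VMc) ≤ Sp := sup_le hle inf_le_left
    have hWrank : Module.finrank (ZMod 2) ↥(Sig ⊔ (Sp ⊓ VMc)) + b = d + c := by
      have h := Submodule.finrank_sup_add_finrank_inf_eq Sig (Sp ⊓ VMc)
      rwa [← inf_assoc, inf_eq_left.mpr hle] at h
    have hW : Sig ⊔ (Sp ⊓ VMc) = Sp := by
      apply Submodule.eq_of_le_of_finrank_le hWle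
      omega
    rw [← hW] at hv
    rw [Submodule.mem_sup] at hv
    obtain ⟨s, hs, w, hw, rfl⟩ := hv
    exact ⟨w, hw, by simpa using hs⟩
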